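/- arXiv:2303.03547 — 4 statements merged into one kernel-verified Lean document; each statement's English description precedes it below -/
import Mathlib

section
/- Let B be an n×n real symmetric positive semi-definite matrix with rank(B) ≥ n−1, partitioned as B = [[B11, b],[b^T, β]] with B11 of order n−1. If λ_min(B) < λ_min(B11), then λ_min(B) = β − b^T (B11 − λ_min(B) I)^{−1} b. -/
open Matrix

/-- Spectral (L2 operator) norm of a real matrix. -/
noncomputable def specNorm {ι κ : Type*} [Fintype ι] [Fintype κ] [DecidableEq κ]
    (A : Matrix ι κ ℝ) : ℝ :=
  ‖LinearMap.toContinuousLinearMap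
      (Matrix.toEuclideanLin A : EuclideanSpace ℝ κ →ₗ[ℝ] EuclideanSpace ℝ ι)‖

/-- Euclidean norm of a real vector. -/
noncomputable def enorm {ι : Type*} [Fintype ι] (v : ι → ℝ) : ℝ :=
  Real.sqrt (∑ i, v i ^ 2)

/-- The `j`-th largest eigenvalue (1-indexed, non-increasing order), realized as the
`j`-th largest root (with multiplicity) of the characteristic polynomial. -/
noncomputable def eigvalDesc {ι : Type*} [Fintype ι] [DecidableEq ι]
    (A : Matrix ι ι ℝ) (j : ℕ) : ℝ :=
  (A.charpoly.roots.sort (· ≤ ·)).getD (Fintype.card ι - j) 0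

/-- The smallest eigenvalue. -/
noncomputable def lmin {ι : Type*} [Fintype ι] [DecidableEq ι] (A : Matrix ι ι ℝ) : ℝ :=
  eigvalDesc A (Fintype.card ι)

/-- The `j`-th largest singular value (1-indexed, non-increasing order). -/
noncomputable def singvalDesc {ι κ : Type*} [Fintype ι] [Fintype κ] [DecidableEq κ]
    (A : Matrix ι κ ℝ) (j : ℕ) : ℝ :=
  Real.sqrt (eigvalDesc (Aᵀ * A) j)

/-- The smallest singular value. -/
noncomputable def smin {ι κ : Type*} [Fintype ι] [Fintype κ] [DecidableEq κ]
    (A : Matrix ι κ ℝ) : ℝ :=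
  Real.sqrt (lmin (Aᵀ * A))


open Polynomial in
lemma lmin_eq_getD' {ι : Type*} [Fintype ι] [DecidableEq ι] (A : Matrix ι ι ℝ) :
    lmin A = (A.charpoly.roots.sort (· ≤ ·)).getD 0 0 := by
  simp [lmin, eigvalDesc]

open Polynomial in
lemma lmin_le' {ι : Type*} [Fintype ι] [DecidableEq ι] {A : Matrix ι ι ℝ} {r : ℝ}
    (hr : r ∈ A.charpoly.roots) : lmin A ≤ r := by
  rw [lmin_eq_getD']
  have hmem : r ∈ A.charpoly.roots.sort (· ≤ ·) := (Multiset.mem_sort _).2 hr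
  have hs : (A.charpoly.roots.sort (· ≤ ·)).Pairwise (· ≤ ·) := Multiset.pairwise_sort _ _
  rcases hl : A.charpoly.roots.sort (· ≤ ·) with _ | ⟨a, t⟩
  · simp [hl] at hmem
  · rw [hl] at hmem hs
    rw [List.pairwise_cons] at hs
    rcases List.mem_cons.1 hmem with h | h
    · simp [h]
    · simpa using hs.1 r h

open Polynomial in
lemma lmin_mem' {ι : Type*} [Fintype ι] [DecidableEq ι] {A : Matrix ι ι ℝ}
    (h : A.charpoly.roots ≠ 0) : lmin A ∈ A.charpoly.roots := by
  rw [lmin_eq_getD']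
  rcases hl : A.charpoly.roots.sort (· ≤ ·) with _ | ⟨a, t⟩
  · exfalso
    apply h
    have := Multiset.sort_eq A.charpoly.roots (· ≤ ·)
    rw [hl] at this; simpa using this.symm
  · have : a ∈ A.charpoly.roots.sort (· ≤ ·) := by rw [hl]; exact List.mem_cons_self
    simpa using (Multiset.mem_sort _).1 this

open Polynomial in
lemma eval_charpoly' {ι : Type*} [Fintype ι] [DecidableEq ι]
    (A : Matrix ι ι ℝ) (μ : ℝ) :
    A.charpoly.eval μ = (μ • (1 : Matrix ι ι ℝ) - A).det := by
  rw [Matrix.charpoly, ← Polynomial.coe_evalRingHom, RingHom.map_det]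
  congr 1
  ext i j
  by_cases h : i = j <;>
    simp [Matrix.charmatrix_apply, Matrix.one_apply, Matrix.diagonal_apply, h]

open Polynomial in
lemma roots_ne_zero' {ι : Type*} [Fintype ι] [DecidableEq ι] [Nonempty ι]
    {A : Matrix ι ι ℝ} (hA : A.IsHermitian) : A.charpoly.roots ≠ 0 := by
  obtain ⟨i⟩ := ‹Nonempty ι›
  set μ := hA.eigenvalues i with hμ
  set v : ι → ℝ := ⇑(hA.eigenvectorBasis i) with hv
  have hev : A *ᵥ v = μ • v := hA.mulVec_eigenvectorBasis i
  have hvne : v ≠ 0 := by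
    intro h
    exact hA.eigenvectorBasis.orthonormal.ne_zero i (by ext j; exact congrFun h j)
  have hker : (μ • (1 : Matrix ι ι ℝ) - A) *ᵥ v = 0 := by
    rw [Matrix.sub_mulVec, Matrix.smul_mulVec, Matrix.one_mulVec, hev, sub_self]
  have hdet : (μ • (1 : Matrix ι ι ℝ) - A).det = 0 :=
    (Matrix.exists_mulVec_eq_zero_iff).1 ⟨v, hvne, hker⟩
  have hroot : μ ∈ A.charpoly.roots := by
    rw [Polynomial.mem_roots (A.charpoly_monic.ne_zero)]
    rw [Polynomial.IsRoot, eval_charpoly', hdet]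
  intro h
  rw [h] at hroot
  simp at hroot

theorem stmt1 (p : ℕ) (B : Matrix (Fin p ⊕ Fin 1) (Fin p ⊕ Fin 1) ℝ)
    (B11 : Matrix (Fin p) (Fin p) ℝ) (b : Fin p → ℝ) (β : ℝ)
    (hBdef : B = fromBlocks B11 (of fun i (_ : Fin 1) => b i)
      (of fun (_ : Fin 1) j => b j) (of fun _ _ => β))
    (hB : B.PosSemidef) (hrank : p ≤ B.rank)
    (hsep : lmin B < lmin B11) :
    lmin B = β - b ⬝ᵥ ((B11 - lmin B • 1)⁻¹ *ᵥ b) := by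
  set lam := lmin B with hlam
  have hroot : lam ∈ B.charpoly.roots := lmin_mem' (roots_ne_zero' hB.1)
  have hdetB : (lam • (1 : Matrix (Fin p ⊕ Fin 1) (Fin p ⊕ Fin 1) ℝ) - B).det = 0 := by
    have := Polynomial.isRoot_of_mem_roots hroot
    rwa [Polynomial.IsRoot, eval_charpoly'] at this
  have hdetB' : (B - lam • (1 : Matrix (Fin p ⊕ Fin 1) (Fin p ⊕ Fin 1) ℝ)).det = 0 := by
    have : B - lam • (1 : Matrix (Fin p ⊕ Fin 1) (Fin p ⊕ Fin 1) ℝ)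
        = -(lam • 1 - B) := (neg_sub _ _).symm
    rw [this, Matrix.det_neg, hdetB, mul_zero]
  have hdet11 : (B11 - lam • (1 : Matrix (Fin p) (Fin p) ℝ)).det ≠ 0 := by
    intro h
    have h2 : (lam • (1 : Matrix (Fin p) (Fin p) ℝ) - B11).det = 0 := by
      have : lam • (1 : Matrix (Fin p) (Fin p) ℝ) - B11 = -(B11 - lam • 1) := (neg_sub _ _).symm
      rw [this, Matrix.det_neg, h, mul_zero]
    have hroot11 : lam ∈ B11.charpoly.roots := by
      rw [Polynomial.mem_roots (B11.charpoly_monic.ne_zero)]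
      rw [Polynomial.IsRoot, eval_charpoly', h2]
    exact absurd (lmin_le' hroot11) (not_le.2 hsep)
  have hunit : IsUnit (B11 - lam • (1 : Matrix (Fin p) (Fin p) ℝ)).det :=
    isUnit_iff_ne_zero.2 hdet11
  haveI : Invertible (B11 - lam • (1 : Matrix (Fin p) (Fin p) ℝ)) :=
    Matrix.invertibleOfIsUnitDet _ hunit
  have hsplit : B - lam • (1 : Matrix (Fin p ⊕ Fin 1) (Fin p ⊕ Fin 1) ℝ)
      = fromBlocks (B11 - lam • 1) (of fun i (_ : Fin 1) => b i)
        (of fun (_ : Fin 1) j => b j)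
        ((of fun (_ : Fin 1) (_ : Fin 1) => β) - lam • 1) := by
    rw [hBdef, ← Matrix.fromBlocks_one, Matrix.fromBlocks_smul]
    ext i j
    rcases i with i | i <;> rcases j with j | j <;>
      simp [Matrix.fromBlocks]
  have hdetprod := Matrix.det_fromBlocks₁₁ (B11 - lam • (1 : Matrix (Fin p) (Fin p) ℝ))
    ((of fun i (_ : Fin 1) => b i) : Matrix (Fin p) (Fin 1) ℝ)
    ((of fun (_ : Fin 1) j => b j) : Matrix (Fin 1) (Fin p) ℝ)
    ((of fun (_ : Fin 1) (_ : Fin 1) => β) - lam • 1)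
  rw [← hsplit, hdetB'] at hdetprod
  rw [Matrix.invOf_eq_nonsing_inv] at hdetprod
  have hzero : (((of fun (_ : Fin 1) (_ : Fin 1) => β) : Matrix (Fin 1) (Fin 1) ℝ) - lam • 1
      - (of fun (_ : Fin 1) j => b j) * (B11 - lam • 1)⁻¹
        * (of fun i (_ : Fin 1) => b i)).det = 0 := by
    rcases mul_eq_zero.1 hdetprod.symm with h | h
    · exact absurd h hdet11
    · exact h
  rw [Matrix.det_fin_one] at hzero
  have hentry : (((of fun (_ : Fin 1) (_ : Fin 1) => β) : Matrix (Fin 1) (Fin 1) ℝ)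
      - lam • (1 : Matrix (Fin 1) (Fin 1) ℝ)
      - ((of fun (_ : Fin 1) j => b j) : Matrix (Fin 1) (Fin p) ℝ) * (B11 - lam • 1)⁻¹
        * ((of fun i (_ : Fin 1) => b i) : Matrix (Fin p) (Fin 1) ℝ)) 0 0
      = β - lam - b ⬝ᵥ ((B11 - lam • 1)⁻¹ *ᵥ b) := by
    have h : b ⬝ᵥ ((B11 - lam • 1)⁻¹ *ᵥ b)
        = ∑ j, (∑ k, b k * (B11 - lam • 1)⁻¹ k j) * b j := by
      rw [Matrix.dotProduct_mulVec]
      simp [Matrix.vecMul, dotProduct, Matrix.mul_apply]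
    simp [Matrix.mul_apply, Matrix.one_apply, h]
  rw [hentry] at hzero
  linarith
end

section
/- Let B be an n×n real symmetric positive semi-definite matrix with rank(B) ≥ n−1, partitioned as B = [[B11, b],[b^T, β]] with B11 of order n−1. If β < λ_min(B11), then λ_min(B) = β − b^T (B11 − λ_min(B) I)^{−1} b ≥ 0. -/
open Matrix

open Polynomial

section aux
variable {ι : Type*} [Fintype ι] [DecidableEq ι]

lemma my_charpoly_conj (U M V : Matrix ι ι ℝ) (hUV : U * V = 1) :
    (U * M * V).charpoly = M.charpoly := by
  set f : Matrix ι ι ℝ →+* Matrix ι ι ℝ[X] := (C : ℝ →+* ℝ[X]).mapMatrix with hf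
  have key : charmatrix (U * M * V) = f U * charmatrix M * f V := by
    unfold charmatrix
    rw [show (C : ℝ →+* ℝ[X]).mapMatrix = f from rfl, _root_.map_mul, _root_.map_mul, mul_sub, sub_mul]
    congr 1
    have hc : Commute (Matrix.scalar ι (X : ℝ[X])) (f U) :=
      Matrix.scalar_commute _ (fun r => Commute.all _ r) _
    rw [← hc.eq, mul_assoc, ← _root_.map_mul, hUV, _root_.map_one, mul_one]
  have hdet : det (f U) * det (f V) = 1 := by
    rw [← det_mul, ← _root_.map_mul, hUV, _root_.map_one, det_one]
  unfold Matrix.charpoly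
  rw [key, det_mul, det_mul, mul_comm, ← mul_assoc, mul_comm (det (f V)), hdet, one_mul]

lemma my_charpoly_diagonal (v : ι → ℝ) :
    (diagonal v).charpoly = ∏ i, (X - C (v i)) := by
  have h : charmatrix (diagonal v) = diagonal (fun i => X - C (v i)) := by
    ext i j
    by_cases hij : i = j
    · subst hij; simp [charmatrix_apply]
    · simp [charmatrix_apply, diagonal_apply_ne _ hij]
  rw [Matrix.charpoly, h, det_diagonal]

lemma my_charpoly_eq_prod (A : Matrix ι ι ℝ) (hA : A.IsHermitian) :
    A.charpoly = ∏ i, (X - C (hA.eigenvalues i)) := by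
  have hU : (hA.eigenvectorUnitary : Matrix ι ι ℝ) * star (hA.eigenvectorUnitary : Matrix ι ι ℝ) = 1 :=
    (Matrix.mem_unitaryGroup_iff).mp (hA.eigenvectorUnitary).2
  have h0 : (RCLike.ofReal ∘ hA.eigenvalues : ι → ℝ) = hA.eigenvalues := by
    funext i; simp [RCLike.ofReal_real_eq_id]
  calc A.charpoly
      = ((hA.eigenvectorUnitary : Matrix ι ι ℝ) * diagonal (RCLike.ofReal ∘ hA.eigenvalues)
          * star (hA.eigenvectorUnitary : Matrix ι ι ℝ)).charpoly := by rw [← Unitary.conjStarAlgAut_apply (S := ℝ), ← hA.spectral_theorem]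
    _ = (diagonal (RCLike.ofReal ∘ hA.eigenvalues) : Matrix ι ι ℝ).charpoly :=
        my_charpoly_conj _ _ _ hU
    _ = ∏ i, (X - C (hA.eigenvalues i)) := by rw [h0, my_charpoly_diagonal]

lemma my_roots_charpoly (A : Matrix ι ι ℝ) (hA : A.IsHermitian) :
    A.charpoly.roots = Finset.univ.val.map hA.eigenvalues := by
  rw [my_charpoly_eq_prod A hA]
  have h : (∏ i, (X - C (hA.eigenvalues i)))
      = ((Finset.univ.val.map hA.eigenvalues).map fun a => X - C a).prod := by
    rw [Multiset.map_map, Finset.prod_eq_multiset_prod]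
    rfl
  rw [h, roots_multiset_prod_X_sub_C]

lemma my_lmin_le_eig (A : Matrix ι ι ℝ) (hA : A.IsHermitian) (i : ι) :
    lmin A ≤ hA.eigenvalues i := by
  unfold lmin eigvalDesc
  rw [Nat.sub_self]
  have hmem : hA.eigenvalues i ∈ A.charpoly.roots.sort (· ≤ ·) := by
    rw [Multiset.mem_sort, my_roots_charpoly A hA]
    exact Multiset.mem_map_of_mem _ (Finset.mem_val.mpr (Finset.mem_univ i))
  have hs : (A.charpoly.roots.sort (· ≤ ·)).Pairwise (· ≤ ·) :=
    Multiset.pairwise_sort _ _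
  cases hL : A.charpoly.roots.sort (· ≤ ·) with
  | nil => rw [hL] at hmem; simp at hmem
  | cons a t =>
    rw [hL] at hmem hs
    rw [List.getD_cons_zero]
    rcases List.mem_cons.mp hmem with h | h
    · exact le_of_eq h.symm
    · exact (List.pairwise_cons.mp hs).1 _ h

lemma my_exists_lmin_eq [Nonempty ι] (A : Matrix ι ι ℝ) (hA : A.IsHermitian) :
    ∃ i, lmin A = hA.eigenvalues i := by
  unfold lmin eigvalDesc
  rw [Nat.sub_self]
  have hlen : (A.charpoly.roots.sort (· ≤ ·)).length = Fintype.card ι := by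
    rw [Multiset.length_sort, my_roots_charpoly A hA, Multiset.card_map]
    rfl
  cases hL : A.charpoly.roots.sort (· ≤ ·) with
  | nil =>
    rw [hL] at hlen
    exact absurd hlen.symm (by simpa using Fintype.card_ne_zero)
  | cons a t =>
    have ha : a ∈ A.charpoly.roots :=
      by rw [← Multiset.mem_sort (r := (· ≤ ·)), hL]; exact List.mem_cons_self
    rw [my_roots_charpoly A hA] at ha
    obtain ⟨i, _, hi⟩ := Multiset.mem_map.mp ha
    exact ⟨i, by rw [List.getD_cons_zero]; exact hi.symm⟩

lemma my_det_smul_one_sub (M : Matrix ι ι ℝ) (μ : ℝ) :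
    det (μ • (1 : Matrix ι ι ℝ) - M) = M.charpoly.eval μ := by
  have h : (charmatrix M).map (evalRingHom μ) = μ • (1 : Matrix ι ι ℝ) - M := by
    ext i j
    by_cases hij : i = j
    · subst hij
      simp [charmatrix_apply, Matrix.sub_apply, Matrix.smul_apply, Matrix.one_apply]
    · simp [charmatrix_apply, diagonal_apply_ne _ hij, Matrix.sub_apply,
        Matrix.smul_apply, Matrix.one_apply_ne hij]
  calc det (μ • (1 : Matrix ι ι ℝ) - M)
      = det ((charmatrix M).map (evalRingHom μ)) := by rw [h]
    _ = (evalRingHom μ) (det (charmatrix M)) := ((evalRingHom μ).map_det _).symm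
    _ = M.charpoly.eval μ := rfl

end aux

theorem stmt2 (p : ℕ) (B : Matrix (Fin p ⊕ Fin 1) (Fin p ⊕ Fin 1) ℝ)
    (B11 : Matrix (Fin p) (Fin p) ℝ) (b : Fin p → ℝ) (β : ℝ)
    (hBdef : B = fromBlocks B11 (of fun i (_ : Fin 1) => b i)
      (of fun (_ : Fin 1) j => b j) (of fun _ _ => β))
    (hB : B.PosSemidef) (hrank : p ≤ B.rank)
    (hsep : β < lmin B11) :
    lmin B = β - b ⬝ᵥ ((B11 - lmin B • 1)⁻¹ *ᵥ b) ∧ 0 ≤ lmin B := by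
  have hH : B.IsHermitian := hB.1
  have hB11H : B11.IsHermitian := by
    have h : Bᴴ = B := hH
    rw [hBdef, fromBlocks_conjTranspose] at h
    have h2 := congrArg Matrix.toBlocks₁₁ h
    have h3 : B11ᴴ = B11 := by simpa [Matrix.toBlocks_fromBlocks₁₁] using h2
    exact h3
  obtain ⟨i₀, hi₀⟩ := my_exists_lmin_eq B hH
  set lam := lmin B with hlam
  have hlam0 : 0 ≤ lam := hi₀ ▸ hB.eigenvalues_nonneg i₀
  have hUU : (hH.eigenvectorUnitary : Matrix (Fin p ⊕ Fin 1) (Fin p ⊕ Fin 1) ℝ) *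
      star (hH.eigenvectorUnitary : Matrix (Fin p ⊕ Fin 1) (Fin p ⊕ Fin 1) ℝ) = 1 :=
    Matrix.mem_unitaryGroup_iff.mp (hH.eigenvectorUnitary).2
  have hDpsd : (diagonal (fun i => hH.eigenvalues i - lam)).PosSemidef :=
    posSemidef_diagonal_iff.mpr fun i => sub_nonneg.mpr (my_lmin_le_eig B hH i)
  have hBlam : (B - lam • 1).PosSemidef := by
    have heq : (hH.eigenvectorUnitary : Matrix (Fin p ⊕ Fin 1) (Fin p ⊕ Fin 1) ℝ) *
        diagonal (fun i => hH.eigenvalues i - lam) *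
        (hH.eigenvectorUnitary : Matrix (Fin p ⊕ Fin 1) (Fin p ⊕ Fin 1) ℝ)ᴴ = B - lam • 1 := by
      have hd : diagonal (fun i => hH.eigenvalues i - lam) =
          diagonal (RCLike.ofReal ∘ hH.eigenvalues) - lam • 1 := by
        ext i j
        by_cases hij : i = j
        · subst hij; simp [Matrix.sub_apply, Matrix.one_apply]
        · simp [diagonal_apply_ne _ hij, Matrix.sub_apply, Matrix.one_apply_ne hij]
      rw [hd, mul_sub, sub_mul, ← Matrix.star_eq_conjTranspose, ← Unitary.conjStarAlgAut_apply (S := ℝ), ← hH.spectral_theorem]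
      congr 1
      rw [mul_smul_comm, mul_one, smul_mul_assoc, hUU]
    exact heq ▸ hDpsd.mul_mul_conjTranspose_same _
  have hdiag : ∀ (M : Matrix (Fin p ⊕ Fin 1) (Fin p ⊕ Fin 1) ℝ), M.PosSemidef →
      ∀ i, 0 ≤ M i i := by
    intro M hM i
    exact hM.diag_nonneg
  have hβ : lam ≤ β := by
    have h0 := hdiag _ hBlam (Sum.inr 0)
    have h1 : (B - lam • 1) (Sum.inr 0) (Sum.inr 0) = β - lam := by
      simp [hBdef, Matrix.sub_apply, Matrix.smul_apply, Matrix.one_apply, fromBlocks]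
    linarith [h1 ▸ h0]
  have hlt : ∀ i, lam < hB11H.eigenvalues i := fun i =>
    lt_of_le_of_lt hβ (lt_of_lt_of_le hsep (my_lmin_le_eig B11 hB11H i))
  have hdetB : det (B - lam • 1) = 0 := by
    have h1 : det (lam • (1 : Matrix (Fin p ⊕ Fin 1) (Fin p ⊕ Fin 1) ℝ) - B) = 0 := by
      rw [my_det_smul_one_sub, my_charpoly_eq_prod B hH, eval_prod]
      refine Finset.prod_eq_zero (Finset.mem_univ i₀) ?_
      simp [hi₀]
    rw [show B - lam • 1 = -(lam • (1 : Matrix (Fin p ⊕ Fin 1) (Fin p ⊕ Fin 1) ℝ) - B) by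
      rw [neg_sub], det_neg, h1, mul_zero]
  have hdetB11 : det (B11 - lam • 1) ≠ 0 := by
    have h1 : det (lam • (1 : Matrix (Fin p) (Fin p) ℝ) - B11) ≠ 0 := by
      rw [my_det_smul_one_sub, my_charpoly_eq_prod B11 hB11H, eval_prod]
      refine Finset.prod_ne_zero_iff.mpr fun i _ => ?_
      simp only [eval_sub, eval_X, eval_C]
      exact sub_ne_zero.mpr (ne_of_lt (hlt i))
    rw [show B11 - lam • 1 = -(lam • (1 : Matrix (Fin p) (Fin p) ℝ) - B11) by rw [neg_sub],
      det_neg]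
    simpa using h1
  haveI : Invertible (B11 - lam • 1) := invertibleOfIsUnitDet _ (isUnit_iff_ne_zero.mpr hdetB11)
  have hblocks : B - lam • 1 = fromBlocks (B11 - lam • 1) (of fun i (_ : Fin 1) => b i)
      (of fun (_ : Fin 1) j => b j) (of fun _ _ => β - lam) := by
    rw [hBdef]
    ext (i | i) (j | j) <;>
      simp [fromBlocks, Matrix.sub_apply, Matrix.smul_apply, Matrix.one_apply]
    intro h
    exact absurd (Subsingleton.elim i j) h
  have hschur := Matrix.det_fromBlocks₁₁ (B11 - lam • 1) (of fun i (_ : Fin 1) => b i)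
    (of fun (_ : Fin 1) j => b j) (of fun _ _ => β - lam)
  rw [← hblocks, hdetB] at hschur
  have hd0 : det ((of fun _ _ => β - lam : Matrix (Fin 1) (Fin 1) ℝ) -
      (of fun (_ : Fin 1) j => b j) * ⅟(B11 - lam • 1) * (of fun i (_ : Fin 1) => b i)) = 0 := by
    rcases mul_eq_zero.mp hschur.symm with h | h
    · exact absurd h hdetB11
    · exact h
  rw [Matrix.det_fin_one] at hd0
  have hentry : ((of fun (_ : Fin 1) j => b j) * ⅟(B11 - lam • 1) *
      (of fun i (_ : Fin 1) => b i)) 0 0 = b ⬝ᵥ ((B11 - lam • 1)⁻¹ *ᵥ b) := by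
    rw [invOf_eq_nonsing_inv]
    simp only [Matrix.mul_apply, Matrix.of_apply, dotProduct, mulVec, Finset.sum_mul]
    rw [Finset.sum_comm]
    refine Finset.sum_congr rfl fun k _ => ?_
    rw [Finset.mul_sum]
    refine Finset.sum_congr rfl fun j _ => ?_
    ring
  rw [Matrix.sub_apply, hentry, Matrix.of_apply] at hd0
  exact ⟨by linarith, hlam0⟩
end

section
/- Let B be an n×n real symmetric positive semi-definite matrix with rank(B) ≥ n−1, partitioned as B = [[B11, b],[b^T, β]] with B11 of order n−1. If β < λ_min(B11), then λ_min(B) ≥ β − b^T B11^{−1} b − β·‖B11^{−1} b‖₂² / (1 − β·‖B11^{−1}‖₂). -/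
open Matrix

/-- Euclidean norm of a real vector. -/
noncomputable def vecEnorm {ι : Type*} [Fintype ι] (v : ι → ℝ) : ℝ :=
  Real.sqrt (∑ i, v i ^ 2)

open Polynomial


lemma my_charpoly_conj_s3 {n R : Type*} [Fintype n] [DecidableEq n] [CommRing R]
    (U D V : Matrix n n R) (h1 : U * V = 1) (h2 : V * U = 1) :
    (U * D * V).charpoly = D.charpoly := by
  have key : charmatrix (U * D * V) = U.map C * charmatrix D * V.map C := by
    rw [charmatrix, charmatrix]
    have hscal : U.map (C : R →+* R[X]) * Matrix.scalar n (X : R[X]) * V.map C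
        = Matrix.scalar n (X : R[X]) := by
      rw [← Matrix.scalar_commute (X : R[X]) (fun r => Commute.all _ _) (U.map C)]
      rw [mul_assoc, ← Matrix.map_mul, h1]
      simp [Matrix.map_one]
    rw [mul_sub, sub_mul, hscal]
    simp only [RingHom.mapMatrix_apply]
    rw [← Matrix.map_mul, ← Matrix.map_mul]
  unfold Matrix.charpoly
  rw [key, Matrix.det_mul, Matrix.det_mul]
  have : (U.map (C : R →+* R[X])).det * (V.map C).det = 1 := by
    rw [← Matrix.det_mul, ← Matrix.map_mul, h1, Matrix.map_one _ (map_zero _) (map_one _),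
      Matrix.det_one]
  ring_nf
  calc (U.map (C : R →+* R[X])).det * (charmatrix D).det * (V.map C).det
      = (charmatrix D).det * ((U.map (C : R →+* R[X])).det * (V.map C).det) := by ring
    _ = (charmatrix D).det := by rw [this, mul_one]

lemma my_charpoly_diagonal_s3 {n R : Type*} [Fintype n] [DecidableEq n] [CommRing R]
    (d : n → R) : (Matrix.diagonal d).charpoly = ∏ i, (X - C (d i)) := by
  have : charmatrix (Matrix.diagonal d) = Matrix.diagonal (fun i => X - C (d i)) := by
    ext i j
    by_cases h : i = j
    · subst h; simp
    · simp [h, Matrix.diagonal_apply_ne _ h]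
  rw [Matrix.charpoly, this, Matrix.det_diagonal]

lemma herm_charpoly {n : Type*} [Fintype n] [DecidableEq n] {A : Matrix n n ℝ}
    (hA : A.IsHermitian) : A.charpoly = ∏ i, (X - C (hA.eigenvalues i)) := by
  conv_lhs => rw [hA.spectral_theorem, Unitary.conjStarAlgAut_apply]
  rw [my_charpoly_conj_s3 _ _ _ (by
      simpa using hA.eigenvectorUnitary.2.2) (by
      simpa using hA.eigenvectorUnitary.2.1)]
  have : (RCLike.ofReal ∘ hA.eigenvalues : n → ℝ) = hA.eigenvalues := by
    ext i; simp
  rw [this, my_charpoly_diagonal_s3]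

lemma herm_roots {n : Type*} [Fintype n] [DecidableEq n] {A : Matrix n n ℝ}
    (hA : A.IsHermitian) :
    A.charpoly.roots = Finset.univ.val.map hA.eigenvalues := by
  rw [herm_charpoly hA]
  rw [Polynomial.roots_prod _ _ (by
    apply Polynomial.Monic.ne_zero
    exact Polynomial.monic_prod_of_monic _ _ (fun i _ => Polynomial.monic_X_sub_C _))]
  simp [Polynomial.roots_X_sub_C, Multiset.bind_singleton]

lemma lmin_spec {n : Type*} [Fintype n] [DecidableEq n] {A : Matrix n n ℝ}
    (hA : A.IsHermitian) :
    (∀ i, lmin A ≤ hA.eigenvalues i) ∧ (Nonempty n → ∃ i, hA.eigenvalues i = lmin A) := by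
  have hsort : List.Pairwise (· ≤ ·) (A.charpoly.roots.sort (· ≤ ·)) :=
    Multiset.pairwise_sort _ _
  have hmem : ∀ x : ℝ, x ∈ (A.charpoly.roots.sort (· ≤ ·)) ↔ ∃ i, hA.eigenvalues i = x := by
    intro x; rw [Multiset.mem_sort, herm_roots hA, Multiset.mem_map]; simp
  have hlmin : lmin A = (A.charpoly.roots.sort (· ≤ ·)).getD 0 0 := by
    rw [lmin, eigvalDesc, Nat.sub_self]
  rcases hL : (A.charpoly.roots.sort (· ≤ ·)) with _ | ⟨a, t⟩
  · constructor
    · intro i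
      exfalso
      have := (hmem (hA.eigenvalues i)).2 ⟨i, rfl⟩
      rw [hL] at this; simp at this
    · rintro ⟨i⟩
      exfalso
      have := (hmem (hA.eigenvalues i)).2 ⟨i, rfl⟩
      rw [hL] at this; simp at this
  · have hm : lmin A = a := by rw [hlmin, hL]; rfl
    rw [hL] at hsort
    have hrel := (List.pairwise_cons.mp hsort).1
    constructor
    · intro i
      have hx := (hmem (hA.eigenvalues i)).2 ⟨i, rfl⟩
      rw [hL] at hx
      rcases List.mem_cons.mp hx with h | h
      · rw [hm, h]
      · rw [hm]; exact hrel _ h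
    · intro _
      have ha : a ∈ (A.charpoly.roots.sort (· ≤ ·)) := by
        rw [hL]; exact List.mem_cons_self
      rcases (hmem a).1 ha with ⟨i, hi⟩
      exact ⟨i, by rw [hm, hi]⟩

section EigBasis
variable {n : Type*} [Fintype n] [DecidableEq n] {A : Matrix n n ℝ}

/-- eigenvectors as plain functions -/
noncomputable def evec (hA : A.IsHermitian) (i : n) : n → ℝ :=
  (WithLp.equiv 2 (n → ℝ)) (hA.eigenvectorBasis i)

lemma evec_mulVec (hA : A.IsHermitian) (i : n) :
    A *ᵥ evec hA i = hA.eigenvalues i • evec hA i :=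
  hA.mulVec_eigenvectorBasis i

lemma evec_dot (hA : A.IsHermitian) (i j : n) :
    evec hA i ⬝ᵥ evec hA j = if i = j then 1 else 0 := by
  have h := orthonormal_iff_ite.mp (hA.eigenvectorBasis.orthonormal) i j
  rw [EuclideanSpace.inner_eq_star_dotProduct] at h
  rw [dotProduct_comm] at h
  simpa [evec] using h

lemma evec_parseval (hA : A.IsHermitian) (x y : n → ℝ) :
    x ⬝ᵥ y = ∑ i, (evec hA i ⬝ᵥ x) * (evec hA i ⬝ᵥ y) := by
  have h := hA.eigenvectorBasis.sum_inner_mul_inner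
    ((WithLp.equiv 2 (n → ℝ)).symm x) ((WithLp.equiv 2 (n → ℝ)).symm y)
  simp only [EuclideanSpace.inner_eq_star_dotProduct] at h
  have hx : ∀ z : n → ℝ, star z = z := fun z => rfl
  simp only [hx, WithLp.equiv_symm_apply, WithLp.ofLp_toLp] at h
  rw [dotProduct_comm x, ← h]
  apply Finset.sum_congr rfl
  intro i _
  rw [dotProduct_comm y]
  rfl

end EigBasis

section More
variable {n : Type*} [Fintype n] [DecidableEq n] {A : Matrix n n ℝ}

lemma symm_dot (hA : A.IsHermitian) (x y : n → ℝ) :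
    x ⬝ᵥ (A *ᵥ y) = (A *ᵥ x) ⬝ᵥ y := by
  rw [Matrix.dotProduct_mulVec, ← Matrix.mulVec_transpose, show Aᵀ = A from hA]

lemma lmin_ge_of_qform [Nonempty n] (hA : A.IsHermitian) {c : ℝ}
    (h : ∀ x : n → ℝ, c * (x ⬝ᵥ x) ≤ x ⬝ᵥ (A *ᵥ x)) : c ≤ lmin A := by
  obtain ⟨i, hi⟩ := (lmin_spec hA).2 ‹_›
  have hv := evec_dot hA i i
  rw [if_pos rfl] at hv
  have := h (evec hA i)
  rw [evec_mulVec hA i, dotProduct_smul, hv, mul_one] at this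
  rw [← hi]
  simpa using this

lemma lmin_isEmpty [IsEmpty n] (A : Matrix n n ℝ) : lmin A = 0 := by
  have : A.charpoly = 1 := by
    rw [Matrix.charpoly, Matrix.det_isEmpty]
  rw [lmin, eigvalDesc, this, Polynomial.roots_one]
  simp

end More

section Inv
variable {n : Type*} [Fintype n] [DecidableEq n] {A : Matrix n n ℝ}

lemma norm_symm_eq (w : n → ℝ) :
    ‖(WithLp.equiv 2 (n → ℝ)).symm w‖ = Real.sqrt (w ⬝ᵥ w) := by
  rw [EuclideanSpace.norm_eq]
  congr 1
  simp [dotProduct, pow_two, Real.norm_eq_abs,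
    abs_mul_abs_self]

lemma isUnit_det_of_eig_ne (hA : A.IsHermitian) (hpos : ∀ i, hA.eigenvalues i ≠ 0) :
    IsUnit A.det := by
  rw [isUnit_iff_ne_zero, hA.det_eq_prod_eigenvalues]
  push_cast
  exact Finset.prod_ne_zero_iff.2 fun i _ => hpos i

lemma inv_mulVec_evec (hA : A.IsHermitian) (hpos : ∀ i, hA.eigenvalues i ≠ 0) (i : n) :
    A⁻¹ *ᵥ evec hA i = (hA.eigenvalues i)⁻¹ • evec hA i := by
  have h1 : A⁻¹ *ᵥ (A *ᵥ evec hA i) = evec hA i := by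
    rw [Matrix.mulVec_mulVec, Matrix.nonsing_inv_mul _ (isUnit_det_of_eig_ne hA hpos),
      Matrix.one_mulVec]
  rw [evec_mulVec hA i, Matrix.mulVec_smul] at h1
  calc A⁻¹ *ᵥ evec hA i
      = (hA.eigenvalues i)⁻¹ • (hA.eigenvalues i • (A⁻¹ *ᵥ evec hA i)) := by
        rw [smul_smul, inv_mul_cancel₀ (hpos i), one_smul]
    _ = (hA.eigenvalues i)⁻¹ • evec hA i := by rw [h1]

lemma dot_inv_mulVec (hA : A.IsHermitian) (hpos : ∀ i, hA.eigenvalues i ≠ 0)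
    (i : n) (x : n → ℝ) :
    evec hA i ⬝ᵥ (A⁻¹ *ᵥ x) = (hA.eigenvalues i)⁻¹ * (evec hA i ⬝ᵥ x) := by
  rw [symm_dot hA.inv, inv_mulVec_evec hA hpos, smul_dotProduct, smul_eq_mul]

lemma specNorm_inv (hA : A.IsHermitian) [Nonempty n] (hpos : 0 < lmin A) :
    specNorm A⁻¹ = (lmin A)⁻¹ := by
  have hle := (lmin_spec hA).1
  have heig : ∀ i, 0 < hA.eigenvalues i := fun i => lt_of_lt_of_le hpos (hle i)
  have hne : ∀ i, hA.eigenvalues i ≠ 0 := fun i => (heig i).ne'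
  have happ : ∀ x : EuclideanSpace ℝ n,
      (LinearMap.toContinuousLinearMap
        (Matrix.toEuclideanLin A⁻¹ : EuclideanSpace ℝ n →ₗ[ℝ] EuclideanSpace ℝ n)) x
      = (WithLp.equiv 2 (n → ℝ)).symm (A⁻¹ *ᵥ (WithLp.equiv 2 (n → ℝ)) x) := by
    intro x
    rw [LinearMap.coe_toContinuousLinearMap']
    rw [Matrix.toEuclideanLin_apply]
    rfl
  apply le_antisymm
  · apply ContinuousLinearMap.opNorm_le_bound _ (inv_nonneg.2 hpos.le)
    intro x
    rw [happ]
    set x' : n → ℝ := (WithLp.equiv 2 (n → ℝ)) x with hx'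
    have hkey : (A⁻¹ *ᵥ x') ⬝ᵥ (A⁻¹ *ᵥ x') ≤ ((lmin A)⁻¹)^2 * (x' ⬝ᵥ x') := by
      rw [evec_parseval hA (A⁻¹ *ᵥ x') (A⁻¹ *ᵥ x'), evec_parseval hA x' x',
        Finset.mul_sum]
      apply Finset.sum_le_sum
      intro i _
      rw [dot_inv_mulVec hA hne]
      have h1 : (hA.eigenvalues i)⁻¹ ≤ (lmin A)⁻¹ :=
        one_div (hA.eigenvalues i) ▸ one_div (lmin A) ▸
          one_div_le_one_div_of_le hpos (hle i)
      have h2 : (0:ℝ) ≤ (hA.eigenvalues i)⁻¹ := inv_nonneg.2 (heig i).le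
      have h3 : (hA.eigenvalues i)⁻¹ * (hA.eigenvalues i)⁻¹ ≤ (lmin A)⁻¹ * (lmin A)⁻¹ :=
        mul_le_mul h1 h1 h2 (h2.trans h1)
      nlinarith [mul_le_mul_of_nonneg_right h3 (mul_self_nonneg (evec hA i ⬝ᵥ x'))]
    have hxx : ‖x‖ = Real.sqrt (x' ⬝ᵥ x') := by
      rw [← norm_symm_eq x']
      congr 1
    rw [norm_symm_eq, hxx]
    calc Real.sqrt ((A⁻¹ *ᵥ x') ⬝ᵥ (A⁻¹ *ᵥ x'))
        ≤ Real.sqrt (((lmin A)⁻¹)^2 * (x' ⬝ᵥ x')) := Real.sqrt_le_sqrt hkey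
      _ = (lmin A)⁻¹ * Real.sqrt (x' ⬝ᵥ x') := by
          rw [Real.sqrt_mul (sq_nonneg _), Real.sqrt_sq (inv_nonneg.2 hpos.le)]
  · obtain ⟨i, hi⟩ := (lmin_spec hA).2 ‹_›
    have hnorm1 : ‖hA.eigenvectorBasis i‖ = 1 := hA.eigenvectorBasis.orthonormal.1 i
    have := ContinuousLinearMap.le_opNorm
      (LinearMap.toContinuousLinearMap
        (Matrix.toEuclideanLin A⁻¹ : EuclideanSpace ℝ n →ₗ[ℝ] EuclideanSpace ℝ n))
      (hA.eigenvectorBasis i)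
    rw [happ, hnorm1, mul_one] at this
    have heq : (A⁻¹ *ᵥ (WithLp.equiv 2 (n → ℝ)) (hA.eigenvectorBasis i))
        = (hA.eigenvalues i)⁻¹ • evec hA i := inv_mulVec_evec hA hne i
    rw [heq] at this
    have : ‖(WithLp.equiv 2 (n → ℝ)).symm ((hA.eigenvalues i)⁻¹ • evec hA i)‖
        ≤ specNorm A⁻¹ := this
    rw [show (WithLp.equiv 2 (n → ℝ)).symm ((hA.eigenvalues i)⁻¹ • evec hA i)
        = (hA.eigenvalues i)⁻¹ • hA.eigenvectorBasis i from rfl] at this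
    rw [norm_smul, hnorm1, mul_one, Real.norm_eq_abs,
      abs_of_nonneg (inv_nonneg.2 (heig i).le), hi] at this
    exact this

end Inv

set_option maxHeartbeats 1000000 in

set_option maxHeartbeats 1000000 in
theorem stmt3 (p : ℕ) (B : Matrix (Fin p ⊕ Fin 1) (Fin p ⊕ Fin 1) ℝ)
    (B11 : Matrix (Fin p) (Fin p) ℝ) (b : Fin p → ℝ) (β : ℝ)
    (hBdef : B = fromBlocks B11 (of fun i (_ : Fin 1) => b i)
      (of fun (_ : Fin 1) j => b j) (of fun _ _ => β))
    (hB : B.PosSemidef) (hrank : p ≤ B.rank)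
    (hsep : β < lmin B11) :
    lmin B ≥ β - b ⬝ᵥ (B11⁻¹ *ᵥ b)
      - β * vecEnorm (B11⁻¹ *ᵥ b) ^ 2 / (1 - β * specNorm B11⁻¹) := by
  classical
  have hβ0 : 0 ≤ β := by
    have h := hB.dotProduct_mulVec_nonneg (Pi.single (Sum.inr 0) 1)
    rw [star_trivial] at h
    simpa [hBdef, dotProduct, Matrix.mulVec] using h
  have hsub : B.submatrix Sum.inl Sum.inl = B11 := by
    ext i j; simp [hBdef]
  have hB11 : B11.PosSemidef := hsub ▸ hB.submatrix Sum.inl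
  have hH : B11.IsHermitian := hB11.1
  rcases isEmpty_or_nonempty (Fin p) with hemp | hne'
  · exfalso; rw [lmin_isEmpty] at hsep; linarith
  have hlm : 0 < lmin B11 := lt_of_le_of_lt hβ0 hsep
  have hle := (lmin_spec hH).1
  have heig : ∀ i, 0 < hH.eigenvalues i := fun i => hlm.trans_le (hle i)
  have hnz : ∀ i, hH.eigenvalues i ≠ 0 := fun i => (heig i).ne'
  set u : Fin p → ℝ := B11⁻¹ *ᵥ b with hu
  set g : Fin p → ℝ := fun i => evec hH i ⬝ᵥ b with hg
  have hdotu : ∀ i, evec hH i ⬝ᵥ u = (hH.eigenvalues i)⁻¹ * g i := fun i =>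
    dot_inv_mulVec hH hnz i b
  have hbu : b ⬝ᵥ u = ∑ i, (hH.eigenvalues i)⁻¹ * g i ^ 2 := by
    rw [evec_parseval hH b u]
    exact Finset.sum_congr rfl fun i _ => by rw [hdotu i, hg]; ring
  have henu : vecEnorm u ^ 2 = ∑ i, ((hH.eigenvalues i)⁻¹ * g i) ^ 2 := by
    have h1 : vecEnorm u ^ 2 = u ⬝ᵥ u := by
      rw [vecEnorm, Real.sq_sqrt (Finset.sum_nonneg fun i _ => sq_nonneg _)]
      simp [dotProduct, pow_two]
    rw [h1, evec_parseval hH u u]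
    exact Finset.sum_congr rfl fun i _ => by rw [hdotu i]; ring
  have hspec : specNorm B11⁻¹ = (lmin B11)⁻¹ := specNorm_inv hH hlm
  obtain ⟨S1, hS1⟩ : ∃ S1 : ℝ, S1 = ∑ i, (hH.eigenvalues i)⁻¹ * g i ^ 2 := ⟨_, rfl⟩
  obtain ⟨S2, hS2⟩ : ∃ S2 : ℝ, S2 = ∑ i, ((hH.eigenvalues i)⁻¹ * g i) ^ 2 := ⟨_, rfl⟩
  have hS1n : 0 ≤ S1 := hS1 ▸
    Finset.sum_nonneg fun i _ => mul_nonneg (inv_nonneg.2 (heig i).le) (sq_nonneg _)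
  have hS2n : 0 ≤ S2 := hS2 ▸ Finset.sum_nonneg fun _ _ => sq_nonneg _
  obtain ⟨d, hd⟩ : ∃ d : ℝ, d = 1 - β * (lmin B11)⁻¹ := ⟨_, rfl⟩
  have hd0 : 0 < d := by
    have h1 : β * (lmin B11)⁻¹ < 1 := by
      rw [← div_eq_mul_inv, div_lt_one hlm]; exact hsep
    rw [hd]; linarith
  obtain ⟨c, hc⟩ : ∃ c : ℝ, c = β - S1 - β * S2 / d := ⟨_, rfl⟩
  rw [ge_iff_le, hspec, hbu, henu, ← hS1, ← hS2, ← hd, ← hc]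
  have hcβ : c ≤ β := by
    have h1 : 0 ≤ β * S2 / d := div_nonneg (mul_nonneg hβ0 hS2n) hd0.le
    rw [hc]; linarith
  have hld : lmin B11 * d = lmin B11 - β := by
    rw [hd]; field_simp
  have hkey : ∑ i, g i ^ 2 / (hH.eigenvalues i - c) ≤ β - c := by
    have hterm : ∀ i, g i ^ 2 / (hH.eigenvalues i - c)
        ≤ (hH.eigenvalues i)⁻¹ * g i ^ 2 + β * ((hH.eigenvalues i)⁻¹ * g i) ^ 2 / d := by
      intro i
      have hee : lmin B11 ≤ hH.eigenvalues i := hle i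
      have hac : 0 < hH.eigenvalues i - c := by linarith
      have h5 : 0 ≤ β - c * d := by
        rcases le_or_gt 0 c with h | h
        · have hd1 : d ≤ 1 := by
            have : 0 ≤ β * (lmin B11)⁻¹ := mul_nonneg hβ0 (inv_nonneg.2 hlm.le)
            rw [hd]; linarith
          nlinarith
        · nlinarith
      have hscal : (hH.eigenvalues i) ^ 2 * d
          ≤ ((hH.eigenvalues i) * d + β) * (hH.eigenvalues i - c) := by
        nlinarith [mul_nonneg (sub_nonneg.2 hee) h5,
          mul_nonneg hlm.le (sub_nonneg.2 hcβ), hld]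
      have hexp : (hH.eigenvalues i)⁻¹ * g i ^ 2 + β * ((hH.eigenvalues i)⁻¹ * g i) ^ 2 / d
          = g i ^ 2 * ((hH.eigenvalues i) * d + β) / ((hH.eigenvalues i) ^ 2 * d) := by
        field_simp [hnz i, hd0.ne']
      rw [hexp, div_le_div_iff₀ hac (mul_pos (pow_pos (heig i) 2) hd0)]
      nlinarith [mul_le_mul_of_nonneg_left hscal (sq_nonneg (g i))]
    calc ∑ i, g i ^ 2 / (hH.eigenvalues i - c)
        ≤ ∑ i, ((hH.eigenvalues i)⁻¹ * g i ^ 2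
            + β * ((hH.eigenvalues i)⁻¹ * g i) ^ 2 / d) :=
          Finset.sum_le_sum fun i _ => hterm i
      _ = S1 + β * S2 / d := by
          rw [Finset.sum_add_distrib, ← hS1]
          congr 1
          rw [hS2, Finset.mul_sum, Finset.sum_div]
      _ = β - c := by rw [hc]; ring
  apply lmin_ge_of_qform hB.1
  intro x
  set y : Fin p → ℝ := fun i => x (Sum.inl i) with hy
  set t := x (Sum.inr 0) with ht
  have hx : x = Sum.elim y (fun _ => t) := by
    funext k
    rcases k with i | j
    · rfl
    · have : j = 0 := Subsingleton.elim _ _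
      rw [this]; rfl
  have hq : x ⬝ᵥ B *ᵥ x = y ⬝ᵥ (B11 *ᵥ y) + 2 * (t * (b ⬝ᵥ y)) + β * t ^ 2 := by
    rw [hx, hBdef, Matrix.fromBlocks_mulVec, sumElim_dotProduct_sumElim]
    simp [Matrix.mulVec, dotProduct, Fin.sum_univ_one, Finset.sum_add_distrib,
      Finset.mul_sum, mul_add, add_mul]
    have h1 : ∑ i : Fin p, y i * (b i * t) = ∑ i : Fin p, t * (b i * y i) :=
      Finset.sum_congr rfl fun i _ => by ring
    have h2 : ∑ i : Fin p, 2 * (t * (b i * y i))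
        = ∑ i : Fin p, t * (b i * y i) + ∑ i : Fin p, t * (b i * y i) := by
      rw [← Finset.sum_add_distrib]
      exact Finset.sum_congr rfl fun i _ => by ring
    rw [h1, h2]; ring
  have hxx : x ⬝ᵥ x = y ⬝ᵥ y + t ^ 2 := by
    rw [hx, sumElim_dotProduct_sumElim]
    simp [dotProduct, Fin.sum_univ_one, pow_two]
  set cv : Fin p → ℝ := fun i => evec hH i ⬝ᵥ y with hcv
  have hyBy : y ⬝ᵥ (B11 *ᵥ y) = ∑ i, hH.eigenvalues i * cv i ^ 2 := by
    rw [evec_parseval hH y (B11 *ᵥ y)]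
    refine Finset.sum_congr rfl fun i _ => ?_
    rw [symm_dot hH (evec hH i) y, evec_mulVec hH i, smul_dotProduct, smul_eq_mul]
    ring
  have hby : b ⬝ᵥ y = ∑ i, g i * cv i := evec_parseval hH b y
  have hyy : y ⬝ᵥ y = ∑ i, cv i ^ 2 := by
    rw [evec_parseval hH y y]
    exact Finset.sum_congr rfl fun i _ => by ring
  rw [hq, hxx, hyBy, hby, hyy]
  have hcomp : ∀ i, c * cv i ^ 2 - hH.eigenvalues i * cv i ^ 2 - 2 * (t * (g i * cv i))
      ≤ g i ^ 2 * t ^ 2 / (hH.eigenvalues i - c) := by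
    intro i
    have hac : 0 < hH.eigenvalues i - c := by linarith [hle i]
    rw [le_div_iff₀ hac]
    nlinarith [sq_nonneg ((hH.eigenvalues i - c) * cv i + t * g i)]
  have hsum := Finset.sum_le_sum fun i (_ : i ∈ Finset.univ) => hcomp i
  have hsplit : ∑ i, (c * cv i ^ 2 - hH.eigenvalues i * cv i ^ 2 - 2 * (t * (g i * cv i)))
      = c * (∑ i, cv i ^ 2) - (∑ i, hH.eigenvalues i * cv i ^ 2)
        - 2 * (t * ∑ i, g i * cv i) := by
    simp only [Finset.mul_sum, ← Finset.sum_sub_distrib]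
  have hfin : ∑ i, g i ^ 2 * t ^ 2 / (hH.eigenvalues i - c)
      = t ^ 2 * ∑ i, g i ^ 2 / (hH.eigenvalues i - c) := by
    rw [Finset.mul_sum]
    exact Finset.sum_congr rfl fun i _ => by ring
  rw [hsplit, hfin] at hsum
  have hlast := mul_le_mul_of_nonneg_left hkey (sq_nonneg t)
  linarith
end

section
/- Let A, E ∈ ℝ^{m×n} with m ≥ n and rank(A) ≥ n−1. Let A = UΣV^T be a full singular value decomposition with Σ = [[Σ1, 0],[0, σ_min],[0, 0]], where Σ1 ∈ ℝ^{(n−1)×(n−1)} is nonsingular diagonal, and partition U^T E V = [[E11, e12],[e21^T, e22],[E31, e32]] commensurately. If 1/‖Σ1^{−1}‖₂ > 4‖E‖₂ and σ_min < ‖E‖₂, then σ_min(A+E)² ≥ ‖e32‖₂² + (σ_min + e22)² − r₃ − r₄, where w = (Σ1+E11)^{−T}[e21, E31^T]·[e22+σ_min; e32], r₃ = 2 e12^T w, and r₄ = ‖w‖₂² + 4‖E‖₂²·‖(Σ1+E11)^{−1}(e12+w)‖₂² / (1 − 4‖E‖₂²·‖(Σ1+E11)^{−1}‖₂²). -/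
open Matrix

/-- Euclidean norm of a real vector. -/
noncomputable def enorm' {ι : Type*} [Fintype ι] (v : ι → ℝ) : ℝ :=
  Real.sqrt (∑ i, v i ^ 2)

open Polynomial

section norms
variable {ι κ : Type*} [Fintype ι] [Fintype κ] [DecidableEq κ]

lemma enorm'_nonneg (v : ι → ℝ) : 0 ≤ enorm' v := Real.sqrt_nonneg _

lemma enorm'_sq (v : ι → ℝ) : enorm' v ^ 2 = ∑ i, v i ^ 2 :=
  Real.sq_sqrt (Finset.sum_nonneg fun i _ => sq_nonneg _)

lemma enorm'_eq_norm (v : ι → ℝ) : enorm' v = ‖(WithLp.equiv 2 (ι → ℝ)).symm v‖ := by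
  rw [EuclideanSpace.norm_eq]
  simp [enorm', Real.norm_eq_abs, sq_abs]

lemma enorm'_mulVec_le (A : Matrix ι κ ℝ) (v : κ → ℝ) :
    enorm' (A *ᵥ v) ≤ specNorm A * enorm' v := by
  have h := (LinearMap.toContinuousLinearMap
      (Matrix.toEuclideanLin A : EuclideanSpace ℝ κ →ₗ[ℝ] EuclideanSpace ℝ ι)).le_opNorm
      ((WithLp.equiv 2 (κ → ℝ)).symm v)
  simpa [specNorm, enorm'_eq_norm, Matrix.toEuclideanLin_apply_piLp_toLp] using h

lemma specNorm_nonneg (A : Matrix ι κ ℝ) : 0 ≤ specNorm A := norm_nonneg _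

lemma specNorm_le_bound (A : Matrix ι κ ℝ) {c : ℝ} (hc : 0 ≤ c)
    (h : ∀ v, enorm' (A *ᵥ v) ≤ c * enorm' v) : specNorm A ≤ c := by
  refine ContinuousLinearMap.opNorm_le_bound _ hc fun x => ?_
  have h2 := h ((WithLp.equiv 2 (κ → ℝ)) x)
  simpa [enorm'_eq_norm, Matrix.toEuclideanLin_apply] using h2

lemma enorm'_add_le (v w : ι → ℝ) : enorm' (v + w) ≤ enorm' v + enorm' w := by
  simp only [enorm'_eq_norm]
  have : (WithLp.equiv 2 (ι → ℝ)).symm (v + w)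
      = (WithLp.equiv 2 (ι → ℝ)).symm v + (WithLp.equiv 2 (ι → ℝ)).symm w := rfl
  rw [this]; exact norm_add_le _ _

lemma enorm'_smul (c : ℝ) (v : ι → ℝ) : enorm' (c • v) = |c| * enorm' v := by
  simp only [enorm'_eq_norm]
  have : (WithLp.equiv 2 (ι → ℝ)).symm (c • v) = c • (WithLp.equiv 2 (ι → ℝ)).symm v := rfl
  rw [this, norm_smul, Real.norm_eq_abs]

lemma enorm'_pos {v : ι → ℝ} (hv : v ≠ 0) : 0 < enorm' v := by
  obtain ⟨i, hi⟩ := Function.ne_iff.mp hv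
  have : (0:ℝ) < ∑ j, v j ^ 2 := by
    have h1 : v i ^ 2 ≤ ∑ j, v j ^ 2 :=
      Finset.single_le_sum (fun j _ => sq_nonneg (v j)) (Finset.mem_univ i)
    have : 0 < v i ^ 2 := by nlinarith [sq_nonneg (v i), sq_abs (v i), abs_pos.mpr hi]
    linarith
  exact Real.sqrt_pos.mpr this

end norms

section dots
variable {ι κ : Type*} [Fintype ι] [Fintype κ]

lemma dot_self_eq (v : ι → ℝ) : v ⬝ᵥ v = ∑ i, v i ^ 2 := by
  simp [dotProduct, sq]

lemma sum_sq_add (a b : ι → ℝ) :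
    ∑ i, (a i + b i) ^ 2 = a ⬝ᵥ a + 2 * (a ⬝ᵥ b) + b ⬝ᵥ b := by
  simp only [dotProduct, Finset.mul_sum, ← Finset.sum_add_distrib]
  exact Finset.sum_congr rfl fun i _ => by ring

lemma dot_self_nonneg (v : ι → ℝ) : 0 ≤ v ⬝ᵥ v := by
  rw [dot_self_eq]; positivity

lemma le_of_sq_le_sq' {a b : ℝ} (hb : 0 ≤ b) (h : a ^ 2 ≤ b ^ 2) (ha : 0 ≤ a) : a ≤ b := by
  nlinarith

lemma orth_enorm {ι : Type*} [Fintype ι] [DecidableEq ι] {Q : Matrix ι ι ℝ} (hQ : Qᵀ * Q = 1) (u : ι → ℝ) :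
    enorm' (Q *ᵥ u) = enorm' u := by
  unfold enorm'
  congr 1
  rw [← dot_self_eq, ← dot_self_eq]
  calc (Q *ᵥ u) ⬝ᵥ (Q *ᵥ u) = ((Q *ᵥ u) ᵥ* Q) ⬝ᵥ u := Matrix.dotProduct_mulVec _ _ _
    _ = u ⬝ᵥ u := by
        rw [← Matrix.vecMul_transpose, Matrix.vecMul_vecMul, hQ, Matrix.vecMul_one]

end dots

section spectral
variable {n : Type*} [Fintype n] [DecidableEq n]

lemma eval_charpoly'_s10 (M : Matrix n n ℝ) (μ : ℝ) :
    M.charpoly.eval μ = (μ • (1 : Matrix n n ℝ) - M).det := by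
  rw [Matrix.charpoly, ← Polynomial.coe_evalRingHom, RingHom.map_det]
  congr 1
  ext i j
  by_cases h : i = j <;>
    simp [h, charmatrix_apply, Matrix.diagonal_apply, Matrix.one_apply, Matrix.smul_apply,
      Matrix.sub_apply]

lemma root_iff_eigen (M : Matrix n n ℝ) (μ : ℝ) :
    M.charpoly.IsRoot μ ↔ ∃ v ≠ (0 : n → ℝ), M *ᵥ v = μ • v := by
  rw [Polynomial.IsRoot, eval_charpoly'_s10, ← Matrix.exists_mulVec_eq_zero_iff]
  constructor
  · rintro ⟨v, hv, hveq⟩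
    refine ⟨v, hv, ?_⟩
    have : μ • v - M *ᵥ v = 0 := by
      rw [← hveq, Matrix.sub_mulVec, Matrix.smul_mulVec, Matrix.one_mulVec]
    linear_combination (norm := module) -this
  · rintro ⟨v, hv, hveq⟩
    refine ⟨v, hv, ?_⟩
    rw [Matrix.sub_mulVec, Matrix.smul_mulVec, Matrix.one_mulVec, hveq, sub_self]

lemma lmin_ge [Nonempty n] {M : Matrix n n ℝ} (hM : M.IsHermitian) {t : ℝ}
    (h : ∀ v : n → ℝ, t * (∑ i, v i ^ 2) ≤ v ⬝ᵥ (M *ᵥ v)) : t ≤ lmin M := by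
  classical
  obtain ⟨i⟩ := ‹Nonempty n›
  have hne : M.charpoly ≠ 0 := (Matrix.charpoly_monic M).ne_zero
  have hroot : hM.eigenvalues i ∈ M.charpoly.roots := by
    rw [Polynomial.mem_roots hne]
    refine (root_iff_eigen M _).mpr ⟨(hM.eigenvectorBasis i : n → ℝ), ?_, hM.mulVec_eigenvectorBasis i⟩
    intro h0
    have h1 : ‖hM.eigenvectorBasis i‖ = 1 := hM.eigenvectorBasis.orthonormal.1 i
    have h2 : (hM.eigenvectorBasis i : EuclideanSpace ℝ n) = 0 := by
      apply (WithLp.equiv 2 (n → ℝ)).injective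
      exact h0
    rw [h2] at h1; simp at h1
  set l := M.charpoly.roots.sort (· ≤ ·) with hl
  have hlne : l ≠ [] := by
    intro hnil
    have : hM.eigenvalues i ∈ l := (Multiset.mem_sort _).mpr hroot
    rw [hnil] at this; simp at this
  have hmem : l.getD 0 0 ∈ M.charpoly.roots := by
    obtain ⟨a, l', hcons⟩ := List.exists_cons_of_ne_nil hlne
    have hin : l.getD 0 0 ∈ l := by rw [hcons]; simp [List.getD]
    exact (Multiset.mem_sort _).mp (hl ▸ hin)
  have hlmin : lmin M = l.getD 0 0 := by
    simp [lmin, eigvalDesc, Nat.sub_self, ← hl, List.getD]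
  rw [hlmin]
  obtain ⟨v, hv0, hveq⟩ := (root_iff_eigen M _).mp ((Polynomial.mem_roots hne).mp hmem)
  have hS : 0 < ∑ j, v j ^ 2 := by
    have := enorm'_pos hv0
    have h2 := enorm'_sq v
    nlinarith [enorm'_nonneg v]
  have hdot : v ⬝ᵥ (M *ᵥ v) = l.getD 0 0 * ∑ j, v j ^ 2 := by
    rw [hveq]
    simp [dotProduct, Finset.mul_sum]
    exact Finset.sum_congr rfl fun j _ => by ring
  have := h v
  rw [hdot] at this
  exact le_of_mul_le_mul_right this hS

lemma charpoly_orth_conj (V G : Matrix n n ℝ) (hV : Vᵀ * V = 1) :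
    (V * G * Vᵀ).charpoly = G.charpoly := by
  have hV2 : V * Vᵀ = 1 := mul_eq_one_comm.mp hV
  have hmap : (V.map C) * (Vᵀ.map C) = (1 : Matrix n n ℝ[X]) := by
    rw [← Matrix.map_mul, hV2, Matrix.map_one C C.map_zero C.map_one]
  have hD : Matrix.diagonal (fun _ : n => (X : ℝ[X])) = (X : ℝ[X]) • 1 := by
    ext i j
    by_cases h : i = j <;> simp [h, Matrix.diagonal_apply, Matrix.one_apply]
  have hcm : ∀ N : Matrix n n ℝ, charmatrix N
      = Matrix.diagonal (fun _ : n => (X : ℝ[X])) - N.map C := by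
    intro N; ext i j
    by_cases h : i = j <;> simp [h, charmatrix_apply, Matrix.diagonal_apply]
  have key : charmatrix (V * G * Vᵀ) = (V.map C) * charmatrix G * (Vᵀ.map C) := by
    rw [hcm, hcm, hD, Matrix.mul_sub, Matrix.sub_mul, ← Matrix.map_mul, ← Matrix.map_mul]
    congr 1
    rw [mul_smul_comm, smul_mul_assoc, Matrix.mul_one, hmap]
  unfold Matrix.charpoly
  rw [key, Matrix.det_mul, Matrix.det_mul]
  have : (V.map C).det * (Vᵀ.map C).det = 1 := by
    rw [← Matrix.det_mul, hmap, Matrix.det_one]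
  calc (V.map C).det * (charmatrix G).det * (Vᵀ.map C).det
      = (V.map C).det * (Vᵀ.map C).det * (charmatrix G).det := by ring
    _ = (charmatrix G).det := by rw [this, one_mul]

end spectral

set_option maxHeartbeats 2000000 in
theorem stmt10 (p q : ℕ)
    (A E : Matrix (Fin p ⊕ (Fin 1 ⊕ Fin q)) (Fin p ⊕ Fin 1) ℝ)
    (U : Matrix (Fin p ⊕ (Fin 1 ⊕ Fin q)) (Fin p ⊕ (Fin 1 ⊕ Fin q)) ℝ)
    (V : Matrix (Fin p ⊕ Fin 1) (Fin p ⊕ Fin 1) ℝ)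
    (S1 E11 : Matrix (Fin p) (Fin p) ℝ) (e12 e21 : Fin p → ℝ) (e22 : ℝ)
    (E31 : Matrix (Fin q) (Fin p) ℝ) (e32 : Fin q → ℝ) (σm : ℝ)
    (hU : Uᵀ * U = 1) (hV : Vᵀ * V = 1)
    (hS1 : S1.IsDiag) (hS1det : S1.det ≠ 0) (hσm : 0 ≤ σm)
    (hA : A = (U * (Matrix.fromBlocks S1 0 0
      (Matrix.of fun i (_ : Fin 1) => Sum.elim (fun (_ : Fin 1) => σm) (fun _ => (0 : ℝ)) i) :
        Matrix (Fin p ⊕ (Fin 1 ⊕ Fin q)) (Fin p ⊕ Fin 1) ℝ) :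
        Matrix (Fin p ⊕ (Fin 1 ⊕ Fin q)) (Fin p ⊕ Fin 1) ℝ) * Vᵀ)
    (hrank : p ≤ A.rank)
    (hE : Uᵀ * E * V = Matrix.fromBlocks E11 (Matrix.of fun i (_ : Fin 1) => e12 i)
      (Matrix.of fun i j => Sum.elim (fun (_ : Fin 1) => e21 j) (fun iq => E31 iq j) i)
      (Matrix.of fun i (_ : Fin 1) => Sum.elim (fun (_ : Fin 1) => e22) (fun iq => e32 iq) i))
    (h1 : 1 / specNorm S1⁻¹ > 4 * specNorm E) (h2 : σm < specNorm E) :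
    ∀ w : Fin p → ℝ,
      w = ((S1 + E11)ᵀ)⁻¹ *ᵥ ((e22 + σm) • e21 + E31ᵀ *ᵥ e32) →
    ∀ r3 : ℝ, r3 = 2 * (e12 ⬝ᵥ w) →
    ∀ r4 : ℝ, r4 = enorm' w ^ 2
        + 4 * specNorm E ^ 2 * enorm' ((S1 + E11)⁻¹ *ᵥ (e12 + w)) ^ 2
          / (1 - 4 * specNorm E ^ 2 * specNorm (S1 + E11)⁻¹ ^ 2) →
    smin (A + E) ^ 2 ≥ enorm' e32 ^ 2 + (σm + e22) ^ 2 - r3 - r4 := by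
  intro w hw r3 hr3 r4 hr4
  classical
  set ε := specNorm E with hεdef
  set F := S1 + E11 with hFdef
  set ν := specNorm F⁻¹ with hνdef
  have hε0 : 0 < ε := lt_of_le_of_lt hσm h2
  have hdetS1 : IsUnit S1.det := isUnit_iff_ne_zero.mpr hS1det
  have hU' : U * Uᵀ = 1 := mul_eq_one_comm.mp hU
  have hV' : V * Vᵀ = 1 := mul_eq_one_comm.mp hV
  have hUt : (Uᵀ)ᵀ * Uᵀ = 1 := by rw [Matrix.transpose_transpose]; exact hU'
  set M := Uᵀ * E * V with hMdef
  -- bound on M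
  have hMle : ∀ u, enorm' (M *ᵥ u) ≤ ε * enorm' u := by
    intro u
    have h1' : M *ᵥ u = Uᵀ *ᵥ (E *ᵥ (V *ᵥ u)) := by
      rw [Matrix.mulVec_mulVec, Matrix.mulVec_mulVec, hMdef]
    rw [h1', orth_enorm hUt]
    calc enorm' (E *ᵥ (V *ᵥ u)) ≤ ε * enorm' (V *ᵥ u) := enorm'_mulVec_le E _
      _ = ε * enorm' u := by rw [orth_enorm hV]
  -- components of M *ᵥ u
  have hMv : ∀ u : (Fin p ⊕ Fin 1) → ℝ, M *ᵥ u = Sum.elim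
      (fun i => (E11 *ᵥ (u ∘ Sum.inl)) i + e12 i * u (Sum.inr 0))
      (Sum.elim (fun _ : Fin 1 => e21 ⬝ᵥ (u ∘ Sum.inl) + e22 * u (Sum.inr 0))
        (fun k => (E31 *ᵥ (u ∘ Sum.inl)) k + e32 k * u (Sum.inr 0))) := by
    intro u
    rw [hE, Matrix.fromBlocks_mulVec]
    funext i
    rcases i with i | i
    · simp [Matrix.mulVec, dotProduct, Fin.sum_univ_one]
    · rcases i with i | k
      · have hi : i = 0 := Subsingleton.elim _ _
        subst hi
        simp [Matrix.mulVec, dotProduct, Fin.sum_univ_one, Fintype.sum_sum_type]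
      · simp [Matrix.mulVec, dotProduct, Fin.sum_univ_one, Fintype.sum_sum_type]
  -- E11 bound
  have hE11le : ∀ v : Fin p → ℝ, enorm' (E11 *ᵥ v) ≤ ε * enorm' v := by
    intro v
    set u : (Fin p ⊕ Fin 1) → ℝ := Sum.elim v (fun _ => 0) with hu
    have h1' : enorm' (E11 *ᵥ v) ^ 2 ≤ enorm' (M *ᵥ u) ^ 2 := by
      rw [hMv u, enorm'_sq, enorm'_sq, Fintype.sum_sum_type, Fintype.sum_sum_type]
      have h0 : u (Sum.inr 0) = 0 := rfl
      have h1 : u ∘ Sum.inl = v := rfl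
      simp only [h0, h1, Sum.elim_inl, Sum.elim_inr, mul_zero, add_zero]
      refine le_add_of_nonneg_right ?_
      positivity
    have h2' : enorm' u = enorm' v := by
      unfold enorm'
      congr 1
      rw [Fintype.sum_sum_type]
      simp [hu]
    have := hMle u
    rw [h2'] at this
    refine le_of_sq_le_sq' (mul_nonneg hε0.le (enorm'_nonneg v)) ?_ (enorm'_nonneg _)
    calc enorm' (E11 *ᵥ v) ^ 2 ≤ enorm' (M *ᵥ u) ^ 2 := h1'
      _ ≤ (ε * enorm' v) ^ 2 := by
          have h3 := enorm'_nonneg (M *ᵥ u)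
          nlinarith
      _ = ε ^ 2 * enorm' v ^ 2 := by ring
      _ = (ε * enorm' v) ^ 2 := by ring
  -- column bound
  have hcol : e12 ⬝ᵥ e12 + e22 ^ 2 + e32 ⬝ᵥ e32 ≤ ε ^ 2 := by
    set u : (Fin p ⊕ Fin 1) → ℝ := Sum.elim 0 (fun _ => 1) with hu
    have h2' : enorm' u = 1 := by
      unfold enorm'
      rw [Fintype.sum_sum_type]
      simp [hu]
    have h1' : enorm' (M *ᵥ u) ^ 2 = e12 ⬝ᵥ e12 + (e22 ^ 2 + e32 ⬝ᵥ e32) := by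
      rw [hMv u, enorm'_sq, Fintype.sum_sum_type, Fintype.sum_sum_type]
      have h0 : u (Sum.inr 0) = 1 := rfl
      have h1 : u ∘ Sum.inl = (0 : Fin p → ℝ) := rfl
      simp only [h0, h1, Sum.elim_inl, Sum.elim_inr, mul_one, Matrix.mulVec_zero,
        dotProduct_zero, Pi.zero_apply, zero_add, Fin.sum_univ_one]
      rw [dot_self_eq, dot_self_eq]
    have h3 := hMle u
    rw [h2', mul_one] at h3
    have h4 : enorm' (M *ᵥ u) ^ 2 ≤ ε ^ 2 := by
      have := enorm'_nonneg (M *ᵥ u); nlinarith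
    rw [h1'] at h4
    linarith
  -- S1 inverse facts
  have hNS1pos : 0 < specNorm S1⁻¹ := by
    rcases lt_or_eq_of_le (specNorm_nonneg S1⁻¹) with h | h
    · exact h
    · rw [← h] at h1; rw [div_zero] at h1; nlinarith
  have h1' : 4 * ε * specNorm S1⁻¹ ≤ 1 := by
    rw [gt_iff_lt, lt_div_iff₀ hNS1pos] at h1
    linarith
  -- lower bound on F
  have hFlow : ∀ v : Fin p → ℝ, 3 * ε * enorm' v ≤ enorm' (F *ᵥ v) := by
    intro v
    have hS1v : enorm' v ≤ specNorm S1⁻¹ * enorm' (S1 *ᵥ v) := by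
      have : S1⁻¹ *ᵥ (S1 *ᵥ v) = v := by
        rw [Matrix.mulVec_mulVec, Matrix.nonsing_inv_mul S1 hdetS1, Matrix.one_mulVec]
      calc enorm' v = enorm' (S1⁻¹ *ᵥ (S1 *ᵥ v)) := by rw [this]
        _ ≤ specNorm S1⁻¹ * enorm' (S1 *ᵥ v) := enorm'_mulVec_le _ _
    have h4e : 4 * ε * enorm' v ≤ enorm' (S1 *ᵥ v) := by
      have he1 := enorm'_nonneg (S1 *ᵥ v)
      nlinarith [enorm'_nonneg v]
    have htri : enorm' (S1 *ᵥ v) ≤ enorm' (F *ᵥ v) + enorm' (E11 *ᵥ v) := by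
      have heq : S1 *ᵥ v = F *ᵥ v + (-1 : ℝ) • (E11 *ᵥ v) := by
        rw [hFdef, Matrix.add_mulVec]
        funext i; simp
      rw [heq]
      calc enorm' (F *ᵥ v + (-1 : ℝ) • (E11 *ᵥ v))
          ≤ enorm' (F *ᵥ v) + enorm' ((-1 : ℝ) • (E11 *ᵥ v)) := enorm'_add_le _ _
        _ = enorm' (F *ᵥ v) + enorm' (E11 *ᵥ v) := by rw [enorm'_smul]; norm_num
    have := hE11le v
    linarith
  -- F invertible
  have hFunit : IsUnit F.det := by
    rw [isUnit_iff_ne_zero]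
    intro hdet
    obtain ⟨v, hv0, hveq⟩ := Matrix.exists_mulVec_eq_zero_iff.mpr hdet
    have := hFlow v
    rw [hveq] at this
    have h0 : enorm' (0 : Fin p → ℝ) = 0 := by simp [enorm']
    rw [h0] at this
    have := enorm'_pos hv0
    nlinarith
  have hFFinv : F * F⁻¹ = 1 := Matrix.mul_nonsing_inv F hFunit
  have hFinvF : F⁻¹ * F = 1 := Matrix.nonsing_inv_mul F hFunit
  have hνb : ∀ u : Fin p → ℝ, 3 * ε * enorm' (F⁻¹ *ᵥ u) ≤ enorm' u := by
    intro u
    have : F *ᵥ (F⁻¹ *ᵥ u) = u := by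
      rw [Matrix.mulVec_mulVec, hFFinv, Matrix.one_mulVec]
    calc 3 * ε * enorm' (F⁻¹ *ᵥ u) ≤ enorm' (F *ᵥ (F⁻¹ *ᵥ u)) := hFlow _
      _ = enorm' u := by rw [this]
  have h3ε : (0:ℝ) < 3 * ε := by linarith
  have hν3 : ν ≤ 1 / (3 * ε) := by
    refine specNorm_le_bound _ (one_div_nonneg.mpr h3ε.le) fun v => ?_
    rw [one_div_mul_eq_div, le_div_iff₀ h3ε]
    have := hνb v
    linarith [hνb v]
  have hεν : 3 * ε * ν ≤ 1 := by
    calc 3 * ε * ν ≤ 3 * ε * (1 / (3 * ε)) :=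
          mul_le_mul_of_nonneg_left hν3 h3ε.le
      _ = 1 := by rw [mul_one_div, div_self h3ε.ne']
  have hν0 : 0 ≤ ν := specNorm_nonneg _
  have hDbig : (5:ℝ)/9 ≤ 1 - 4 * ε ^ 2 * ν ^ 2 := by
    nlinarith [mul_nonneg hε0.le hν0]
  have hDpos : (0:ℝ) < 1 - 4 * ε ^ 2 * ν ^ 2 := by linarith
  -- w and z facts
  have hdetFt : IsUnit Fᵀ.det := by rwa [Matrix.det_transpose]
  have hwF : Fᵀ *ᵥ w = (e22 + σm) • e21 + E31ᵀ *ᵥ e32 := by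
    rw [hw, Matrix.mulVec_mulVec, Matrix.mul_nonsing_inv _ hdetFt, Matrix.one_mulVec]
  set z : Fin p → ℝ := F⁻¹ *ᵥ (e12 + w) with hzdef
  have hz : F *ᵥ z = e12 + w := by
    rw [hzdef, Matrix.mulVec_mulVec, hFFinv, Matrix.one_mulVec]
  -- abbreviations
  set μ := σm + e22 with hμdef
  set D : ℝ := 1 - 4 * ε ^ 2 * ν ^ 2 with hDdef
  set Sw := w ⬝ᵥ w with hSwdef
  set S32 := e32 ⬝ᵥ e32 with hS32def
  set Sz := z ⬝ᵥ z with hSzdef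
  set T : ℝ := enorm' e32 ^ 2 + (σm + e22) ^ 2 - r3 - r4 with hTdef
  have hS32e : enorm' e32 ^ 2 = S32 := by rw [enorm'_sq, hS32def, dot_self_eq]
  have hSwe : enorm' w ^ 2 = Sw := by rw [enorm'_sq, hSwdef, dot_self_eq]
  have hSze : enorm' z ^ 2 = Sz := by rw [enorm'_sq, hSzdef, dot_self_eq]
  have hTid : T + 4 * ε ^ 2 * Sz / D = S32 + μ ^ 2 - r3 - Sw := by
    rw [hTdef, hr4, hS32e, hSwe, hSze, hμdef]
    ring
  have hT4 : T ≤ 4 * ε ^ 2 := by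
    have hSz0 : (0:ℝ) ≤ Sz := hSzdef ▸ dot_self_nonneg z
    have hc : 0 ≤ 4 * ε ^ 2 * Sz / D :=
      div_nonneg (mul_nonneg (by positivity) hSz0) hDpos.le
    have hs : 0 ≤ e12 ⬝ᵥ e12 + r3 + Sw := by
      have h0 := dot_self_nonneg (e12 + w)
      have : (e12 + w) ⬝ᵥ (e12 + w) = e12 ⬝ᵥ e12 + r3 + Sw := by
        rw [hr3, hSwdef]
        simp [add_dotProduct, dotProduct_add, dotProduct_comm w e12]
        ring
      linarith [this ▸ h0]
    have hμ2 : μ ^ 2 ≤ 2 * σm ^ 2 + 2 * e22 ^ 2 := by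
      rw [hμdef]; nlinarith [sq_nonneg (σm - e22)]
    have hσε : σm ^ 2 ≤ ε ^ 2 := by nlinarith
    have he22 : e22 ^ 2 ≤ ε ^ 2 := by
      nlinarith [dot_self_nonneg e12, dot_self_nonneg e32]
    nlinarith [hTid, dot_self_nonneg e12, dot_self_nonneg e32]
  -- the B matrix
  set Sg := (fromBlocks S1 0 0
      (of fun i (_ : Fin 1) => Sum.elim (fun (_ : Fin 1) => σm) (fun _ => (0 : ℝ)) i) :
      Matrix (Fin p ⊕ (Fin 1 ⊕ Fin q)) (Fin p ⊕ Fin 1) ℝ) with hSgdef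
  set B := Sg + M with hBdef
  clear_value ε F ν M z μ D Sw S32 Sz T Sg B
  -- the quadratic form bound
  have key : ∀ x : (Fin p ⊕ Fin 1) → ℝ, T * (∑ i, x i ^ 2) ≤ (B *ᵥ x) ⬝ᵥ (B *ᵥ x) := by
    intro x
    set x1 : Fin p → ℝ := x ∘ Sum.inl with hx1def
    set γ : ℝ := x (Sum.inr 0) with hγdef
    have hBx : B *ᵥ x = Sum.elim (fun i => (F *ᵥ x1) i + γ * e12 i)
        (Sum.elim (fun _ : Fin 1 => e21 ⬝ᵥ x1 + γ * μ)
          (fun k => (E31 *ᵥ x1) k + γ * e32 k)) := by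
      rw [hBdef, Matrix.add_mulVec, hMv x, hSgdef, Matrix.fromBlocks_mulVec]
      funext i
      rcases i with i | i
      · simp [hx1def, hγdef, hFdef, Matrix.add_mulVec]
        ring
      · rcases i with i | k
        · have hi : i = 0 := Subsingleton.elim _ _
          subst hi
          simp [hx1def, hγdef, hμdef, Matrix.mulVec, dotProduct, Fin.sum_univ_one]
          ring
        · simp [hx1def, hγdef, Matrix.mulVec, dotProduct, Fin.sum_univ_one]
          ring
    have hSx : ∑ i, x i ^ 2 = (x1 ⬝ᵥ x1) + γ ^ 2 := by
      rw [Fintype.sum_sum_type, dot_self_eq]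
      simp [hx1def, hγdef, Fin.sum_univ_one]
    set y := F *ᵥ x1 with hydef
    set u3 := E31 *ᵥ x1 with hu3def
    set uz := x1 + γ • z with huzdef
    set Pq := (F *ᵥ uz) ⬝ᵥ (F *ᵥ uz) with hPqdef
    have hSB : (B *ᵥ x) ⬝ᵥ (B *ᵥ x) = (∑ i, (y i + γ * e12 i) ^ 2)
        + ((e21 ⬝ᵥ x1 + γ * μ) ^ 2 + ∑ k, (u3 k + γ * e32 k) ^ 2) := by
      rw [dot_self_eq, hBx, Fintype.sum_sum_type, Fintype.sum_sum_type]
      simp [Fin.sum_univ_one, hydef, hu3def]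
    have hexp1 : ∑ i, (y i + γ * e12 i) ^ 2
        = y ⬝ᵥ y + 2 * γ * (y ⬝ᵥ e12) + γ ^ 2 * (e12 ⬝ᵥ e12) := by
      have h := sum_sq_add y (γ • e12)
      simp only [Pi.smul_apply, smul_eq_mul] at h
      rw [h, dotProduct_smul, smul_dotProduct, dotProduct_smul]
      simp only [smul_eq_mul]
      ring
    have hexp3 : ∑ k, (u3 k + γ * e32 k) ^ 2
        = u3 ⬝ᵥ u3 + 2 * γ * (u3 ⬝ᵥ e32) + γ ^ 2 * S32 := by
      have h := sum_sq_add u3 (γ • e32)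
      simp only [Pi.smul_apply, smul_eq_mul] at h
      rw [h, dotProduct_smul, smul_dotProduct, dotProduct_smul, hS32def]
      simp only [smul_eq_mul]
      ring
    have hcomm : y ⬝ᵥ w = w ⬝ᵥ y := dotProduct_comm _ _
    have hgdot : μ * (e21 ⬝ᵥ x1) + u3 ⬝ᵥ e32 = w ⬝ᵥ y := by
      have ha : u3 ⬝ᵥ e32 = (E31ᵀ *ᵥ e32) ⬝ᵥ x1 := by
        rw [hu3def, dotProduct_comm, Matrix.dotProduct_mulVec, ← Matrix.mulVec_transpose]
      have hb : w ⬝ᵥ y = (Fᵀ *ᵥ w) ⬝ᵥ x1 := by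
        rw [hydef, Matrix.dotProduct_mulVec, ← Matrix.mulVec_transpose]
      rw [ha, hb, hwF, add_dotProduct, smul_dotProduct]
      simp only [smul_eq_mul, hμdef]
      ring
    have hFuz : F *ᵥ uz = y + γ • (e12 + w) := by
      rw [huzdef, Matrix.mulVec_add, Matrix.mulVec_smul, hz, hydef]
    have hPq : Pq = y ⬝ᵥ y + 2 * γ * (y ⬝ᵥ e12) + 2 * γ * (y ⬝ᵥ w)
        + γ ^ 2 * (e12 ⬝ᵥ e12 + r3 + Sw) := by
      have hs : (e12 + w) ⬝ᵥ (e12 + w) = e12 ⬝ᵥ e12 + r3 + Sw := by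
        rw [hr3, hSwdef]
        simp only [add_dotProduct, dotProduct_add, dotProduct_comm w e12]
        ring
      have hexp := sum_sq_add y (γ • (e12 + w))
      simp only [Pi.smul_apply, Pi.add_apply, smul_eq_mul] at hexp
      rw [hPqdef, hFuz, dot_self_eq]
      simp only [Pi.smul_apply, Pi.add_apply, smul_eq_mul]
      rw [hexp, dotProduct_smul, smul_dotProduct, dotProduct_smul,
        dotProduct_add, hs]
      simp only [smul_eq_mul]
      ring
    have expand2 : (e21 ⬝ᵥ x1 + γ * μ) ^ 2
        = (e21 ⬝ᵥ x1) ^ 2 + 2 * γ * (μ * (e21 ⬝ᵥ x1)) + γ ^ 2 * μ ^ 2 := by ring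
    have hgdot2 : 2 * γ * (μ * (e21 ⬝ᵥ x1)) + 2 * γ * (u3 ⬝ᵥ e32) = 2 * γ * (y ⬝ᵥ w) := by
      rw [hcomm]
      linear_combination (2 * γ) * hgdot
    have hchain : Pq + γ ^ 2 * (μ ^ 2 + S32 - r3 - Sw) ≤ (B *ᵥ x) ⬝ᵥ (B *ᵥ x) := by
      rw [hSB, hexp1, hexp3, expand2]
      linarith only [hgdot2, hPq, sq_nonneg (e21 ⬝ᵥ x1), dot_self_nonneg u3]
    have hSz0 : (0:ℝ) ≤ Sz := hSzdef ▸ dot_self_nonneg z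
    have hPq0 : (0:ℝ) ≤ Pq := dot_self_nonneg _
    have hdiv0 : (0:ℝ) ≤ 4 * ε ^ 2 * Sz / D :=
      div_nonneg (mul_nonneg (by positivity) hSz0) hDpos.le
    have hcore : T * (x1 ⬝ᵥ x1) ≤ Pq + γ ^ 2 * (4 * ε ^ 2 * Sz / D) := by
      rcases le_or_gt T 0 with hT | hT
      · nlinarith only [hT, dot_self_nonneg x1, mul_nonneg (sq_nonneg γ) hdiv0, hPq0]
      · set a := enorm' uz with hadef
        set b := |γ| * enorm' z with hbdef
        have ha0 : 0 ≤ a := enorm'_nonneg _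
        have hb0 : 0 ≤ b := mul_nonneg (abs_nonneg _) (enorm'_nonneg _)
        have htri : enorm' x1 ≤ a + b := by
          have hxe : x1 = uz + (-γ) • z := by
            rw [huzdef]; module
          rw [hxe]
          calc enorm' (uz + (-γ) • z) ≤ enorm' uz + enorm' ((-γ) • z) := enorm'_add_le _ _
            _ = a + b := by rw [enorm'_smul, abs_neg, hadef, hbdef]
        have hx1a : x1 ⬝ᵥ x1 ≤ (a + b) ^ 2 := by
          have hh : x1 ⬝ᵥ x1 = enorm' x1 ^ 2 := by rw [enorm'_sq, dot_self_eq]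
          rw [hh]
          exact pow_le_pow_left₀ (enorm'_nonneg _) htri 2
        have ha2 : a ^ 2 ≤ ν ^ 2 * Pq := by
          have huz2 : F⁻¹ *ᵥ (F *ᵥ uz) = uz := by
            rw [Matrix.mulVec_mulVec, hFinvF, Matrix.one_mulVec]
          have h5 : enorm' uz ≤ ν * enorm' (F *ᵥ uz) := by
            calc enorm' uz = enorm' (F⁻¹ *ᵥ (F *ᵥ uz)) := by rw [huz2]
              _ ≤ ν * enorm' (F *ᵥ uz) := by rw [hνdef]; exact enorm'_mulVec_le _ _
          have h6 : enorm' (F *ᵥ uz) ^ 2 = Pq := by rw [enorm'_sq, hPqdef, dot_self_eq]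
          calc a ^ 2 ≤ (ν * enorm' (F *ᵥ uz)) ^ 2 := pow_le_pow_left₀ ha0 h5 2
            _ = ν ^ 2 * Pq := by rw [mul_pow, h6]
        have hb2 : b ^ 2 = γ ^ 2 * Sz := by
          rw [hbdef, mul_pow, sq_abs]
          rw [enorm'_sq, ← dot_self_eq, hSzdef]
        have hsc : 4 * ε ^ 2 * (a + b) ^ 2 ≤ Pq + 4 * ε ^ 2 * b ^ 2 / D := by
          rcases eq_or_lt_of_le hν0 with hν | hν
          · have ha0' : a = 0 := by
              have h9 : a ^ 2 ≤ 0 := by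
                have h10 := ha2
                rw [← hν] at h10
                simpa using h10
              have h11 : a ^ 2 = 0 := le_antisymm h9 (sq_nonneg a)
              exact (pow_eq_zero_iff (by norm_num : 2 ≠ 0)).mp h11
            have hz0 : enorm' z ≤ 0 := by
              have hzb := enorm'_mulVec_le F⁻¹ (e12 + w)
              rw [← hzdef, ← hνdef] at hzb
              nlinarith only [hzb, enorm'_nonneg (e12 + w), hν]
            have hb0' : b = 0 := by
              have h9 : enorm' z = 0 := le_antisymm hz0 (enorm'_nonneg _)
              rw [hbdef, h9, mul_zero]
            rw [ha0', hb0']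
            simpa using hPq0
          · have hDt : D = 1 - 4 * ε ^ 2 * ν ^ 2 := hDdef
            have hDpos' : (0:ℝ) < 1 - 4 * ε ^ 2 * ν ^ 2 := hDt ▸ hDpos
            have hkey2 : (4 * ε ^ 2 * ν ^ 2) * (1 - 4 * ε ^ 2 * ν ^ 2) * (a + b) ^ 2
                ≤ (1 - 4 * ε ^ 2 * ν ^ 2) * (ν ^ 2 * Pq) + (4 * ε ^ 2 * ν ^ 2) * b ^ 2 := by
              nlinarith only [sq_nonneg ((1 - 4 * ε ^ 2 * ν ^ 2) * a - 4 * ε ^ 2 * ν ^ 2 * b),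
                mul_nonneg hDpos'.le (sub_nonneg.mpr ha2)]
            rw [hDt, ← sub_nonneg]
            have hfrac : Pq + 4 * ε ^ 2 * b ^ 2 / (1 - 4 * ε ^ 2 * ν ^ 2)
                  - 4 * ε ^ 2 * (a + b) ^ 2
                = ((1 - 4 * ε ^ 2 * ν ^ 2) * (ν ^ 2 * Pq) + (4 * ε ^ 2 * ν ^ 2) * b ^ 2
                    - (4 * ε ^ 2 * ν ^ 2) * (1 - 4 * ε ^ 2 * ν ^ 2) * (a + b) ^ 2)
                  / (ν ^ 2 * (1 - 4 * ε ^ 2 * ν ^ 2)) := by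
              field_simp [hν.ne', hDpos'.ne']
            rw [hfrac]
            apply div_nonneg (by linarith only [hkey2]) (mul_nonneg (sq_nonneg ν) hDpos'.le)
        have h7 : T * (x1 ⬝ᵥ x1) ≤ 4 * ε ^ 2 * (a + b) ^ 2 := by
          calc T * (x1 ⬝ᵥ x1) ≤ (4 * ε ^ 2) * (x1 ⬝ᵥ x1) :=
                mul_le_mul_of_nonneg_right hT4 (dot_self_nonneg x1)
            _ ≤ 4 * ε ^ 2 * (a + b) ^ 2 := mul_le_mul_of_nonneg_left hx1a (by positivity)
        have h8 : γ ^ 2 * (4 * ε ^ 2 * Sz / D) = 4 * ε ^ 2 * b ^ 2 / D := by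
          rw [hb2]; ring
        linarith only [hsc, h7, h8]
    rw [hSx]
    have hTγ : γ ^ 2 * (T + 4 * ε ^ 2 * Sz / D) = γ ^ 2 * (μ ^ 2 + S32 - r3 - Sw) := by
      linear_combination γ ^ 2 * hTid
    nlinarith only [hcore, hchain, hTγ]
  -- reduction of smin to the quadratic form
  have hEeq : E = U * M * Vᵀ := by
    rw [hMdef]
    calc E = (U * Uᵀ) * E * (V * Vᵀ) := by rw [hU', hV', Matrix.one_mul, Matrix.mul_one]
      _ = U * (Uᵀ * E * V) * Vᵀ := by simp only [Matrix.mul_assoc]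
  have hAB : A + E = U * B * Vᵀ := by
    rw [hA, hEeq, hBdef, Matrix.mul_add, Matrix.add_mul]
  have hgram : (A + E)ᵀ * (A + E) = V * (Bᵀ * B) * Vᵀ := by
    rw [hAB]
    simp only [Matrix.transpose_mul, Matrix.transpose_transpose]
    calc V * (Bᵀ * Uᵀ) * (U * B * Vᵀ)
        = V * (Bᵀ * ((Uᵀ * U) * (B * Vᵀ))) := by simp only [Matrix.mul_assoc]
      _ = V * (Bᵀ * B) * Vᵀ := by rw [hU]; simp only [Matrix.one_mul, Matrix.mul_assoc]
  have hcp : ((A + E)ᵀ * (A + E)).charpoly = (Bᵀ * B).charpoly := by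
    rw [hgram]; exact charpoly_orth_conj V _ hV
  have hlmineq : lmin ((A + E)ᵀ * (A + E)) = lmin (Bᵀ * B) := by
    unfold lmin eigvalDesc; rw [hcp]
  have hquad : ∀ x, x ⬝ᵥ ((Bᵀ * B) *ᵥ x) = (B *ᵥ x) ⬝ᵥ (B *ᵥ x) := by
    intro x
    rw [← Matrix.mulVec_mulVec, Matrix.dotProduct_mulVec, Matrix.vecMul_transpose]
  haveI : Nonempty (Fin p ⊕ Fin 1) := ⟨Sum.inr 0⟩
  have hherm : (Bᵀ * B).IsHermitian := by
    have h := Matrix.isHermitian_conjTranspose_mul_self B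
    rwa [Matrix.conjTranspose_eq_transpose_of_trivial] at h
  have hlminT : T ≤ lmin (Bᵀ * B) := lmin_ge hherm (fun v => by rw [hquad]; exact key v)
  have hlmin0 : (0:ℝ) ≤ lmin (Bᵀ * B) := lmin_ge hherm (fun v => by
    rw [hquad, zero_mul]; exact dot_self_nonneg _)
  show smin (A + E) ^ 2 ≥ T
  unfold smin
  rw [hlmineq, Real.sq_sqrt hlmin0]
  exact hlminT
end
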